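/- Let h ≥ 1 and let m_1,…,m_h, n_1,…,n_h be positive integers, and let G = NSG(m_1,…,m_h; n_1,…,n_h). Then the multiplicity of 0 as an eigenvalue of the adjacency matrix of G equals Σ_{i=1}^{h} (m_i − 1). -/

import Mathlib

/-- The multiplicity of `μ` as an eigenvalue of `G`: the dimension of
the kernel of `A(G) - μ I`. -/
noncomputable def SimpleGraph.eigMult {V : Type*} [Fintype V] (G : SimpleGraph V) (μ : ℝ) : ℕ :=
  letI := Classical.decEq V
  letI : DecidableRel G.Adj := Classical.decRel _
  Module.finrank ℝ (LinearMap.ker (Matrix.toLin' (G.adjMatrix ℝ - μ • (1 : Matrix V V ℝ))))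

/-- The nested split graph `NSG(m₁,…,m_h; n₁,…,n_h)`: the vertex set is the disjoint union
of `U₁,…,U_h, V₁,…,V_h` with `|Uᵢ| = mᵢ`, `|Vᵢ| = nᵢ`; the `Vᵢ`'s form a clique,
the `Uᵢ`'s form an independent set, and a vertex of `Uᵢ` is adjacent to a vertex of `Vⱼ`
iff `j ≤ i`. -/
def NSG (h : ℕ) (m n : Fin h → ℕ) :
    SimpleGraph ((Σ i : Fin h, Fin (m i)) ⊕ (Σ i : Fin h, Fin (n i))) where
  Adj x y :=
    match x, y with
    | Sum.inl _, Sum.inl _ => False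
    | Sum.inl ⟨i, _⟩, Sum.inr ⟨j, _⟩ => j ≤ i
    | Sum.inr ⟨j, _⟩, Sum.inl ⟨i, _⟩ => j ≤ i
    | Sum.inr a, Sum.inr b => a ≠ b
  symm := by
    constructor
    rintro (⟨i, a⟩ | ⟨i, a⟩) (⟨j, b⟩ | ⟨j, b⟩) hadj
    · exact hadj
    · exact hadj
    · exact hadj
    · exact Ne.symm hadj
  loopless := by
    constructor
    rintro (⟨i, a⟩ | ⟨i, a⟩) hadj
    · exact hadj
    · exact hadj rfl



private lemma nsg_prefix_zero {h : ℕ} (g : Fin h → ℝ)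
    (H : ∀ i, ∑ j ∈ Finset.Iic i, g j = 0) (j : Fin h) : g j = 0 := by
  have wf : WellFounded ((· < ·) : Fin h → Fin h → Prop) :=
    (inferInstance : WellFoundedLT (Fin h)).wf
  refine wf.induction (C := fun j => g j = 0) j ?_
  intro i IH
  have hi := H i
  rw [← Finset.Iio_insert, Finset.sum_insert (by simp)] at hi
  rw [Finset.sum_eq_zero (fun k hk => IH k (Finset.mem_Iio.mp hk))] at hi
  simpa using hi

private lemma nsg_suffix_zero {h : ℕ} (g : Fin h → ℝ)
    (H : ∀ i, ∑ j ∈ Finset.Ici i, g j = 0) (j : Fin h) : g j = 0 := by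
  have wf : WellFounded ((· > ·) : Fin h → Fin h → Prop) :=
    (inferInstance : WellFoundedGT (Fin h)).wf
  refine wf.induction (C := fun j => g j = 0) j ?_
  intro i IH
  have hi := H i
  rw [← Finset.Ioi_insert, Finset.sum_insert (by simp)] at hi
  rw [Finset.sum_eq_zero (fun k hk => IH k (Finset.mem_Ioi.mp hk))] at hi
  simpa using hi

private lemma nsg_adj_ll {h : ℕ} {m n : Fin h → ℕ} (x y : Σ i : Fin h, Fin (m i)) :
    (NSG h m n).Adj (Sum.inl x) (Sum.inl y) ↔ False := Iff.rfl

private lemma nsg_adj_lr {h : ℕ} {m n : Fin h → ℕ} (i : Fin h) (a : Fin (m i)) (j : Fin h)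
    (b : Fin (n j)) : (NSG h m n).Adj (Sum.inl ⟨i, a⟩) (Sum.inr ⟨j, b⟩) ↔ j ≤ i := Iff.rfl

private lemma nsg_adj_rl {h : ℕ} {m n : Fin h → ℕ} (i : Fin h) (a : Fin (m i)) (j : Fin h)
    (b : Fin (n j)) : (NSG h m n).Adj (Sum.inr ⟨j, b⟩) (Sum.inl ⟨i, a⟩) ↔ j ≤ i := Iff.rfl

private lemma nsg_adj_rr {h : ℕ} {m n : Fin h → ℕ} (x y : Σ i : Fin h, Fin (n i)) :
    (NSG h m n).Adj (Sum.inr x) (Sum.inr y) ↔ x ≠ y := Iff.rfl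

private lemma nsg_mulVec_inl (h : ℕ) (m n : Fin h → ℕ)
    [DecidableRel (NSG h m n).Adj]
    (f : ((Σ i : Fin h, Fin (m i)) ⊕ (Σ i : Fin h, Fin (n i))) → ℝ)
    (i : Fin h) (a : Fin (m i)) :
    ((NSG h m n).adjMatrix ℝ).mulVec f (Sum.inl ⟨i, a⟩) =
      ∑ j ∈ Finset.Iic i, ∑ b : Fin (n j), f (Sum.inr ⟨j, b⟩) := by
  classical
  rw [Matrix.mulVec, dotProduct, Fintype.sum_sum_type]
  rw [← Finset.univ_sigma_univ, Finset.sum_sigma, ← Finset.univ_sigma_univ, Finset.sum_sigma]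
  simp only [SimpleGraph.adjMatrix_apply, nsg_adj_ll, nsg_adj_lr, nsg_adj_rl, nsg_adj_rr, ite_mul, one_mul, zero_mul]
  rw [Finset.sum_eq_zero (fun i' _ => Finset.sum_eq_zero (fun a' _ => by simp)), zero_add]
  have key : ∀ j : Fin h, (∑ b : Fin (n j), if j ≤ i then f (Sum.inr ⟨j, b⟩) else 0)
      = if j ≤ i then ∑ b : Fin (n j), f (Sum.inr ⟨j, b⟩) else 0 := by
    intro j; split <;> simp
  rw [Finset.sum_congr rfl (fun j _ => key j), ← Finset.sum_filter]
  congr 1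
  ext j; simp

private lemma nsg_mulVec_inr (h : ℕ) (m n : Fin h → ℕ)
    [DecidableRel (NSG h m n).Adj]
    (f : ((Σ i : Fin h, Fin (m i)) ⊕ (Σ i : Fin h, Fin (n i))) → ℝ)
    (j : Fin h) (b : Fin (n j)) :
    ((NSG h m n).adjMatrix ℝ).mulVec f (Sum.inr ⟨j, b⟩) =
      (∑ i ∈ Finset.Ici j, ∑ a : Fin (m i), f (Sum.inl ⟨i, a⟩)) +
        ((∑ p : Σ k : Fin h, Fin (n k), f (Sum.inr p)) - f (Sum.inr ⟨j, b⟩)) := by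
  classical
  rw [Matrix.mulVec, dotProduct, Fintype.sum_sum_type]
  congr 1
  · rw [← Finset.univ_sigma_univ, Finset.sum_sigma]
    simp only [SimpleGraph.adjMatrix_apply, nsg_adj_ll, nsg_adj_lr, nsg_adj_rl, nsg_adj_rr, ite_mul, one_mul, zero_mul]
    have key : ∀ i : Fin h, (∑ a : Fin (m i), if j ≤ i then f (Sum.inl ⟨i, a⟩) else 0)
        = if j ≤ i then ∑ a : Fin (m i), f (Sum.inl ⟨i, a⟩) else 0 := by
      intro i; split <;> simp
    rw [Finset.sum_congr rfl (fun i _ => key i), ← Finset.sum_filter]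
    congr 1
    ext i; simp
  · simp only [SimpleGraph.adjMatrix_apply, nsg_adj_ll, nsg_adj_lr, nsg_adj_rl, nsg_adj_rr, ite_mul, one_mul, zero_mul]
    have key : ∀ p : Σ k : Fin h, Fin (n k),
        (if (⟨j, b⟩ : Σ k : Fin h, Fin (n k)) ≠ p then f (Sum.inr p) else 0)
          = f (Sum.inr p) - (if p = ⟨j, b⟩ then f (Sum.inr p) else 0) := by
      intro p
      by_cases hp : p = (⟨j, b⟩ : Σ k : Fin h, Fin (n k)) <;> simp [hp, ne_comm]
    rw [Finset.sum_congr rfl (fun p _ => key p), Finset.sum_sub_distrib,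
      Finset.sum_ite_eq' Finset.univ (⟨j, b⟩ : Σ k : Fin h, Fin (n k))]
    simp

private def psiMap (h : ℕ) (m n : Fin h → ℕ) :
    (((Σ i : Fin h, Fin (m i)) ⊕ (Σ i : Fin h, Fin (n i))) → ℝ) →ₗ[ℝ]
      ((Σ i : Fin h, Fin (n i)) → ℝ) × (Fin h → ℝ) where
  toFun f := (fun p => f (Sum.inr p), fun i => ∑ a : Fin (m i), f (Sum.inl ⟨i, a⟩))
  map_add' f g := by
    refine Prod.ext rfl ?_
    funext i
    simp [Finset.sum_add_distrib]
  map_smul' c f := by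
    refine Prod.ext rfl ?_
    funext i
    simp [Finset.mul_sum]

private lemma psiMap_surjective (h : ℕ) (m n : Fin h → ℕ) (hm : ∀ i, 1 ≤ m i) :
    Function.Surjective (psiMap h m n) := by
  rintro ⟨g, c⟩
  classical
  refine ⟨Sum.elim (fun p => if p.2 = (⟨0, hm p.1⟩ : Fin (m p.1)) then c p.1 else 0) g, ?_⟩
  refine Prod.ext rfl ?_
  funext i
  show (∑ a : Fin (m i),
      if a = (⟨0, hm i⟩ : Fin (m i)) then c i else 0) = c i
  rw [Finset.sum_ite_eq' Finset.univ]
  simp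

private lemma nsg_ker_eq (h : ℕ) (m n : Fin h → ℕ)
    [DecidableEq ((Σ i : Fin h, Fin (m i)) ⊕ (Σ i : Fin h, Fin (n i)))]
    [DecidableRel (NSG h m n).Adj] (hm : ∀ i, 1 ≤ m i) (hn : ∀ i, 1 ≤ n i) :
    LinearMap.ker (Matrix.toLin' ((NSG h m n).adjMatrix ℝ)) =
      LinearMap.ker (psiMap h m n) := by
  classical
  ext f
  simp only [LinearMap.mem_ker]
  constructor
  · intro hf
    rw [Matrix.toLin'_apply] at hf
    have heq : ∀ v, ((NSG h m n).adjMatrix ℝ).mulVec f v = 0 := fun v => congrFun hf v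
    have hU : ∀ i : Fin h, ∑ j ∈ Finset.Iic i,
        (∑ b : Fin (n j), f (Sum.inr ⟨j, b⟩)) = 0 := by
      intro i
      have h0 := heq (Sum.inl ⟨i, ⟨0, hm i⟩⟩)
      rwa [nsg_mulVec_inl] at h0
    have hY : ∀ j : Fin h, (∑ b : Fin (n j), f (Sum.inr ⟨j, b⟩)) = 0 :=
      nsg_prefix_zero _ hU
    have hS : (∑ p : Σ k : Fin h, Fin (n k), f (Sum.inr p)) = 0 := by
      rw [← Finset.univ_sigma_univ, Finset.sum_sigma]
      exact Finset.sum_eq_zero fun j _ => hY j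
    have hfV : ∀ (j : Fin h) (b : Fin (n j)), f (Sum.inr ⟨j, b⟩) =
        ∑ i ∈ Finset.Ici j, ∑ a : Fin (m i), f (Sum.inl ⟨i, a⟩) := by
      intro j b
      have h0 := heq (Sum.inr ⟨j, b⟩)
      rw [nsg_mulVec_inr, hS] at h0
      linarith
    have hR : ∀ j : Fin h,
        (∑ i ∈ Finset.Ici j, ∑ a : Fin (m i), f (Sum.inl ⟨i, a⟩)) = 0 := by
      intro j
      have h2 : (n j : ℝ) * (∑ i ∈ Finset.Ici j, ∑ a : Fin (m i), f (Sum.inl ⟨i, a⟩)) = 0 := by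
        calc (n j : ℝ) * (∑ i ∈ Finset.Ici j, ∑ a : Fin (m i), f (Sum.inl ⟨i, a⟩))
            = ∑ _b : Fin (n j), (∑ i ∈ Finset.Ici j, ∑ a : Fin (m i), f (Sum.inl ⟨i, a⟩)) := by
              simp [Finset.sum_const, mul_comm]
          _ = ∑ b : Fin (n j), f (Sum.inr ⟨j, b⟩) :=
              Finset.sum_congr rfl fun b _ => (hfV j b).symm
          _ = 0 := hY j
      have hnj : (n j : ℝ) ≠ 0 := Nat.cast_ne_zero.mpr (Nat.one_le_iff_ne_zero.mp (hn j))
      exact (mul_eq_zero.mp h2).resolve_left hnj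
    have hX : ∀ i : Fin h, (∑ a : Fin (m i), f (Sum.inl ⟨i, a⟩)) = 0 :=
      nsg_suffix_zero _ hR
    refine Prod.ext ?_ ?_
    · funext p
      obtain ⟨j, b⟩ := p
      show f (Sum.inr ⟨j, b⟩) = 0
      rw [hfV j b, hR j]
    · funext i
      exact hX i
  · intro hf
    have h1 : ∀ p : Σ k : Fin h, Fin (n k), f (Sum.inr p) = 0 :=
      fun p => congrFun (congrArg Prod.fst hf) p
    have h2 : ∀ i : Fin h, (∑ a : Fin (m i), f (Sum.inl ⟨i, a⟩)) = 0 :=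
      fun i => congrFun (congrArg Prod.snd hf) i
    rw [Matrix.toLin'_apply]
    funext v
    obtain (⟨i, a⟩ | ⟨j, b⟩) := v
    · rw [nsg_mulVec_inl]
      show _ = (0:ℝ)
      exact Finset.sum_eq_zero fun j _ => Finset.sum_eq_zero fun b _ => h1 ⟨j, b⟩
    · rw [nsg_mulVec_inr]
      show _ = (0:ℝ)
      rw [h1 ⟨j, b⟩, Finset.sum_eq_zero (fun i _ => h2 i),
        Finset.sum_eq_zero (fun p _ => h1 p)]
      ring

private lemma nsg_finrank (h : ℕ) (m n : Fin h → ℕ)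
    [DecidableEq ((Σ i : Fin h, Fin (m i)) ⊕ (Σ i : Fin h, Fin (n i)))]
    [DecidableRel (NSG h m n).Adj]
    (hm : ∀ i, 1 ≤ m i) (hn : ∀ i, 1 ≤ n i) :
    Module.finrank ℝ (LinearMap.ker (Matrix.toLin' ((NSG h m n).adjMatrix ℝ))) =
      ∑ i : Fin h, (m i - 1) := by
  rw [nsg_ker_eq h m n hm hn]
  have hrank := LinearMap.finrank_range_add_finrank_ker (psiMap h m n)
  rw [LinearMap.range_eq_top.mpr (psiMap_surjective h m n hm), finrank_top] at hrank
  have hdom : Module.finrank ℝ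
      (((Σ i : Fin h, Fin (m i)) ⊕ (Σ i : Fin h, Fin (n i))) → ℝ)
      = (∑ i : Fin h, m i) + (∑ i : Fin h, n i) := by
    simp [Module.finrank_pi, Fintype.card_sum, Fintype.card_sigma]
  have hcod : Module.finrank ℝ
      (((Σ i : Fin h, Fin (n i)) → ℝ) × (Fin h → ℝ)) = (∑ i : Fin h, n i) + h := by
    simp [Module.finrank_prod, Module.finrank_pi, Fintype.card_sigma]
  rw [hdom, hcod] at hrank
  have hsum : ∑ i : Fin h, m i = (∑ i : Fin h, (m i - 1)) + h := by
    have : ∀ i ∈ Finset.univ, m i = (m i - 1) + 1 :=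
      fun i _ => (Nat.sub_add_cancel (hm i)).symm
    rw [Finset.sum_congr rfl this, Finset.sum_add_distrib]
    simp
  omega

theorem nsg_mult_zero (h : ℕ) (hh : 1 ≤ h) (m n : Fin h → ℕ)
    (hm : ∀ i, 1 ≤ m i) (hn : ∀ i, 1 ≤ n i) :
    (NSG h m n).eigMult 0 = ∑ i : Fin h, (m i - 1) := by
  unfold SimpleGraph.eigMult
  rw [zero_smul ℝ, sub_zero]
  exact @nsg_finrank h m n (Classical.decEq _) (Classical.decRel _) hm hn
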